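/- Let d ≥ 1 and n ≥ 1 be integers. The union of the Kuhn simplices k(v,π), taken over all admissible pairs (v,π) for n, equals S^n = {x ∈ ℝ^d : n ≥ x_1 ≥ x_2 ≥ … ≥ x_d ≥ 0}. -/
import Mathlib


/-- The right `d`-simplex `S^α = {x ∈ ℝ^d : α ≥ x_1 ≥ x_2 ≥ … ≥ x_d ≥ 0}`
(coordinates indexed by `Fin d`, in order). -/
def Sset (d : ℕ) (α : ℝ) : Set (Fin d → ℝ) :=
  {x | (∀ i : Fin d, 0 ≤ x i ∧ x i ≤ α) ∧ ∀ i j : Fin d, i ≤ j → x j ≤ x i}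

/-- The Kuhn simplex `k(v,π) = {x : 1 ≥ (x−v)_{π(1)} ≥ … ≥ (x−v)_{π(d)} ≥ 0}`. -/
def kuhn (d : ℕ) (v : Fin d → ℝ) (π : Equiv.Perm (Fin d)) : Set (Fin d → ℝ) :=
  {x | (∀ i : Fin d, 0 ≤ x (π i) - v (π i) ∧ x (π i) - v (π i) ≤ 1) ∧
       ∀ i j : Fin d, i ≤ j → x (π j) - v (π j) ≤ x (π i) - v (π i)}

/-- `(v,π)` with `v ∈ ℤ^d` is admissible for `m` if `v ∈ S^{m-1}` and whenever
`v_j = v_{j+1}`, `j` precedes `j+1` in `π`, i.e. `π⁻¹(j) < π⁻¹(j+1)`. -/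
def admissible (d m : ℕ) (v : Fin d → ℤ) (π : Equiv.Perm (Fin d)) : Prop :=
  ((fun i => (v i : ℝ)) ∈ Sset d ((m : ℝ) - 1)) ∧
  ∀ (j : Fin d) (h : (j : ℕ) + 1 < d),
    v j = v ⟨(j : ℕ) + 1, h⟩ → π.symm j < π.symm ⟨(j : ℕ) + 1, h⟩

/-- Chain antitonicity from adjacent steps, for functions on `Fin d`. -/
lemma adj_antitone {d : ℕ} {g : Fin d → ℝ}
    (h : ∀ (j : ℕ) (hj : j + 1 < d), g ⟨j + 1, hj⟩ ≤ g ⟨j, Nat.lt_of_succ_lt hj⟩) :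
    ∀ a b : Fin d, a ≤ b → g b ≤ g a := by
  have key : ∀ (k : ℕ) (a : Fin d) (hk : (a : ℕ) + k < d), g ⟨(a : ℕ) + k, hk⟩ ≤ g a := by
    intro k
    induction k with
    | zero => intro a hk; simp
    | succ m ih =>
      intro a hk
      have hm : (a : ℕ) + m < d := by omega
      have h1 : g ⟨(a : ℕ) + m + 1, by omega⟩ ≤ g ⟨(a : ℕ) + m, hm⟩ :=
        h ((a : ℕ) + m) (by omega)
      have h2 : (⟨(a : ℕ) + (m + 1), hk⟩ : Fin d) = ⟨(a : ℕ) + m + 1, by omega⟩ := rfl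
      rw [h2]
      exact h1.trans (ih a hm)
  intro a b hab
  have hb : b = ⟨(a : ℕ) + ((b : ℕ) - (a : ℕ)), by omega⟩ := by
    ext; simp; omega
  rw [hb]
  exact key _ a _

/-- the union of the Kuhn simplices over all admissible pairs for `n`
equals `S^n`. -/
theorem iUnion_admissible_kuhn_eq_Sset (d n : ℕ) (hd : 1 ≤ d) (hn : 1 ≤ n) :
    ⋃ (v : Fin d → ℤ) (π : Equiv.Perm (Fin d)) (_ : admissible d n v π),
      kuhn d (fun i => (v i : ℝ)) π = Sset d (n : ℝ) := by
  ext x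
  simp only [Set.mem_iUnion]
  constructor
  · rintro ⟨v, π, ⟨⟨hvb, hvmono⟩, htie⟩, hfb, hford⟩
    constructor
    · intro i
      have h1 := hfb (π.symm i)
      rw [Equiv.apply_symm_apply] at h1
      have h2 := hvb i
      simp only at h2
      exact ⟨by linarith [h1.1, h2.1], by linarith [h1.2, h2.2]⟩
    · intro a b hab
      refine adj_antitone (fun j hj => ?_) a b hab
      set j0 : Fin d := ⟨j, Nat.lt_of_succ_lt hj⟩
      set j1 : Fin d := ⟨j + 1, hj⟩
      have hj01 : j0 ≤ j1 := by simp [j0, j1, Fin.le_def]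
      by_cases hve : v j0 = v j1
      · have hlt := htie j0 hj hve
        have := hford (π.symm j0) (π.symm j1) hlt.le
        rw [Equiv.apply_symm_apply, Equiv.apply_symm_apply] at this
        have hcast : ((v j0 : ℝ)) = (v j1 : ℝ) := by exact_mod_cast hve
        linarith
      · have hmono := hvmono j0 j1 hj01
        simp only at hmono
        have hZ : v j1 < v j0 := lt_of_le_of_ne (by exact_mod_cast hmono) (Ne.symm hve)
        have hZ1 : (v j1 : ℝ) + 1 ≤ (v j0 : ℝ) := by exact_mod_cast hZ
        have h1 := hfb (π.symm j1)
        rw [Equiv.apply_symm_apply] at h1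
        have h0 := hfb (π.symm j0)
        rw [Equiv.apply_symm_apply] at h0
        linarith [h1.2, h0.1]
  · rintro ⟨hxb, hxmono⟩
    set v : Fin d → ℤ := fun i => min ⌊x i⌋ ((n : ℤ) - 1) with hv
    set g : Fin d → ℝ := fun i => -(x i - (v i : ℝ)) with hg
    set π := Tuple.sort g with hπ
    have hsort := (Tuple.eq_sort_iff (f := g) (σ := π)).mp hπ
    have hvle : ∀ i, (v i : ℝ) ≤ x i := by
      intro i
      have h1 : (v i : ℝ) ≤ (⌊x i⌋ : ℝ) := by exact_mod_cast min_le_left _ _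
      exact h1.trans (Int.floor_le _)
    have hf0 : ∀ i, 0 ≤ x i - (v i : ℝ) := fun i => by linarith [hvle i]
    have hf1 : ∀ i, x i - (v i : ℝ) ≤ 1 := by
      intro i
      rcases le_total (⌊x i⌋) ((n : ℤ) - 1) with h | h
      · have he : v i = ⌊x i⌋ := min_eq_left h
        rw [he]
        linarith [Int.lt_floor_add_one (x i)]
      · have he : v i = (n : ℤ) - 1 := min_eq_right h
        rw [he]
        push_cast
        linarith [(hxb i).2]
    have hadm : admissible d n v π := by
      constructor
      · constructor
        · intro i
          constructor
          · have h1 : (0 : ℤ) ≤ v i := by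
              refine le_min (Int.floor_nonneg.2 (hxb i).1) (by omega)
            show (0:ℝ) ≤ (v i : ℝ)
            exact_mod_cast h1
          · have h1 : v i ≤ (n : ℤ) - 1 := min_le_right _ _
            have : (v i : ℝ) ≤ ((n : ℤ) - 1 : ℤ) := by exact_mod_cast h1
            push_cast at this
            simpa using this
        · intro a b hab
          have h1 : v b ≤ v a :=
            min_le_min (Int.floor_le_floor (hxmono a b hab)) le_rfl
          show (v b : ℝ) ≤ (v a : ℝ)
          exact_mod_cast h1
      · intro j h hvj
        set j1 : Fin d := ⟨(j : ℕ) + 1, h⟩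
        have hjlt : j < j1 := by simp [j1, Fin.lt_def]
        have hne : π.symm j ≠ π.symm j1 := by
          intro hcon
          exact absurd (π.symm.injective hcon) hjlt.ne
        by_contra hle
        push_neg at hle
        have hlt : π.symm j1 < π.symm j := lt_of_le_of_ne hle (fun hcon => hne hcon.symm)
        have hgm : g (π (π.symm j1)) ≤ g (π (π.symm j)) := hsort.1 hlt.le
        rw [Equiv.apply_symm_apply, Equiv.apply_symm_apply] at hgm
        have hxle : x j1 ≤ x j := hxmono j j1 hjlt.le
        have hvcast : ((v j : ℝ)) = (v j1 : ℝ) := by exact_mod_cast hvj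
        have hgeq : g (π (π.symm j1)) = g (π (π.symm j)) := by
          rw [Equiv.apply_symm_apply, Equiv.apply_symm_apply]
          simp only [hg]
          have : x j1 = x j := by
            have : x j ≤ x j1 := by simp only [hg] at hgm; linarith
            linarith
          rw [this, hvcast]
        have := hsort.2 (π.symm j1) (π.symm j) hlt hgeq
        rw [Equiv.apply_symm_apply, Equiv.apply_symm_apply] at this
        exact absurd this (not_lt.2 hjlt.le)
    refine ⟨v, π, hadm, ?_, ?_⟩
    · intro i
      exact ⟨hf0 _, hf1 _⟩
    · intro i j hij
      have := hsort.1 hij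
      simp only [Function.comp, hg] at this
      linarith
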